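/- For every partition λ and every integer i ≥ 1, ∑_μ ε(μ/λ) = o_i + ∑_ν ε(λ/ν), where the first sum is over partitions μ ⊇ λ such that μ/λ is a ribbon of size i, the second sum is over partitions ν ⊆ λ such that λ/ν is a ribbon of size i, and o_i equals 1 if i is odd and 0 if i is even. -/

import Mathlib

/-- Two cells of `ℕ × ℕ` are adjacent when they share a side. -/
def CellAdj (a b : ℕ × ℕ) : Prop :=
  (a.1 = b.1 ∧ (a.2 + 1 = b.2 ∨ b.2 + 1 = a.2)) ∨
  (a.2 = b.2 ∧ (a.1 + 1 = b.1 ∨ b.1 + 1 = a.1))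

/-- A finite set of cells is connected if any two of its cells are joined by a
path of cells of the set, consecutive ones sharing a side. -/
def ConnectedCells (S : Finset (ℕ × ℕ)) : Prop :=
  ∀ a ∈ S, ∀ b ∈ S,
    Relation.ReflTransGen (fun x y => x ∈ S ∧ y ∈ S ∧ CellAdj x y) a b

/-- `S` contains no 2 × 2 square of cells. -/
def NoTwoByTwo (S : Finset (ℕ × ℕ)) : Prop :=
  ¬ ∃ i j : ℕ, (i, j) ∈ S ∧ (i + 1, j) ∈ S ∧ (i, j + 1) ∈ S ∧ (i + 1, j + 1) ∈ S

/-- The cells of the skew shape `μ / ν` (`ν` first argument, `μ` second). -/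
def skewCells (ν μ : YoungDiagram) : Finset (ℕ × ℕ) :=
  μ.cells \ ν.cells

/-- `μ / ν` is a ribbon: a nonempty connected skew shape with no 2 × 2 square. -/
def IsRibbon (ν μ : YoungDiagram) : Prop :=
  ν ≤ μ ∧ (skewCells ν μ).Nonempty ∧ ConnectedCells (skewCells ν μ) ∧
    NoTwoByTwo (skewCells ν μ)

/-- The height of the skew shape `μ / ν`: the number of rows it occupies, minus one. -/
def skewHeight (ν μ : YoungDiagram) : ℕ :=
  ((skewCells ν μ).image Prod.fst).card - 1

/-- The sign of the skew shape `μ / ν`, i.e. `(-1) ^ height`. -/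
def skewSign (ν μ : YoungDiagram) : ℤ :=
  (-1) ^ skewHeight ν μ

namespace Stmt10

lemma cellAdj_symm {a b : ℕ × ℕ} (h : CellAdj a b) : CellAdj b a := by
  unfold CellAdj at *; tauto

lemma mem_skewCells {ν μ : YoungDiagram} {r c : ℕ} :
    (r, c) ∈ skewCells ν μ ↔ ν.rowLen r ≤ c ∧ c < μ.rowLen r := by
  simp only [skewCells, Finset.mem_sdiff, YoungDiagram.mem_cells,
    YoungDiagram.mem_iff_lt_rowLen, not_lt, and_comm]

lemma le_iff_rowLen {ν μ : YoungDiagram} :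
    ν ≤ μ ↔ ∀ r, ν.rowLen r ≤ μ.rowLen r := by
  constructor
  · intro h r
    by_contra hc
    push_neg at hc
    have : (r, μ.rowLen r) ∈ ν := YoungDiagram.mem_iff_lt_rowLen.2 hc
    have := h this
    simp [YoungDiagram.mem_iff_lt_rowLen] at this
  · intro h p hp
    obtain ⟨r, c⟩ := p
    rw [YoungDiagram.mem_iff_lt_rowLen] at hp ⊢
    exact hp.trans_le (h r)

lemma ext_rowLen {ν μ : YoungDiagram} (h : ∀ r, ν.rowLen r = μ.rowLen r) : ν = μ := by
  ext ⟨r, c⟩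
  simp [YoungDiagram.mem_iff_lt_rowLen, h r]

/-- Construct a Young diagram from a weakly decreasing, eventually-zero row function. -/
def ofFn (f : ℕ → ℕ) (hf : ∀ r, f (r + 1) ≤ f r) (R : ℕ) (hR : f R = 0) : YoungDiagram where
  cells := (Finset.range R ×ˢ Finset.range (f 0)).filter fun p => p.2 < f p.1
  isLowerSet := by
    have hanti : Antitone f := antitone_nat_of_succ_le hf
    rintro ⟨r1, c1⟩ ⟨r2, c2⟩ ⟨h1, h2⟩ hm
    simp only [Finset.mem_coe, Finset.mem_filter, Finset.mem_product, Finset.mem_range] at hm ⊢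
    have hlt : c2 < f r2 := lt_of_le_of_lt h2 (hm.2.trans_le (hanti h1))
    refine ⟨⟨?_, lt_of_lt_of_le hlt (hanti (Nat.zero_le _))⟩, hlt⟩
    by_contra hc
    push_neg at hc
    have : f r2 = 0 := Nat.le_zero.1 ((hanti hc).trans hR.le)
    omega

lemma mem_ofFn {f : ℕ → ℕ} {hf : ∀ r, f (r + 1) ≤ f r} {R : ℕ} {hR : f R = 0} {r c : ℕ} :
    (r, c) ∈ ofFn f hf R hR ↔ c < f r := by
  have hanti : Antitone f := antitone_nat_of_succ_le hf
  constructor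
  · intro h
    have h' : (r, c) ∈ (ofFn f hf R hR).cells := h
    simp only [ofFn, Finset.mem_filter] at h'
    exact h'.2
  · intro h
    have hr : r < R := by
      by_contra hc
      push_neg at hc
      have : f r = 0 := Nat.le_zero.1 ((hanti hc).trans hR.le)
      omega
    show (r, c) ∈ (ofFn f hf R hR).cells
    simp only [ofFn, Finset.mem_filter, Finset.mem_product, Finset.mem_range]
    exact ⟨⟨hr, lt_of_lt_of_le h (hanti (Nat.zero_le _))⟩, h⟩

lemma rowLen_ofFn {f : ℕ → ℕ} {hf : ∀ r, f (r + 1) ≤ f r} {R : ℕ} {hR : f R = 0} (r : ℕ) :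
    (ofFn f hf R hR).rowLen r = f r := by
  have h : ∀ c, c < (ofFn f hf R hR).rowLen r ↔ c < f r := by
    intro c
    rw [← YoungDiagram.mem_iff_lt_rowLen, mem_ofFn]
  by_contra hc
  rcases Nat.lt_or_ge ((ofFn f hf R hR).rowLen r) (f r) with h1 | h1
  · exact absurd ((h _).2 h1) (lt_irrefl _)
  · have h2 : (ofFn f hf R hR).rowLen r ≠ f r := hc
    have h3 : f r < (ofFn f hf R hR).rowLen r := lt_of_le_of_ne h1 (Ne.symm hc)
    exact absurd ((h _).1 h3) (lt_irrefl _)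

lemma rowLen_zero_of_le {μ : YoungDiagram} {r : ℕ} (h : μ.colLen 0 ≤ r) : μ.rowLen r = 0 := by
  by_contra hc
  have : (r, 0) ∈ μ := YoungDiagram.mem_iff_lt_rowLen.2 (Nat.pos_of_ne_zero hc)
  rw [YoungDiagram.mem_iff_lt_colLen] at this
  omega

lemma rowLen_pos_of_lt {μ : YoungDiagram} {r : ℕ} (h : r < μ.colLen 0) : 0 < μ.rowLen r := by
  have : (r, 0) ∈ μ := YoungDiagram.mem_iff_lt_colLen.2 h
  rwa [YoungDiagram.mem_iff_lt_rowLen] at this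

end Stmt10

namespace Stmt10

/-- Row data of a ribbon `μ/ν`: occupied rows are exactly `[a,b]` and consecutive
rows overlap in exactly one column. -/
def RData (ν μ : YoungDiagram) (a b : ℕ) : Prop :=
  a ≤ b ∧ (∀ r, ν.rowLen r < μ.rowLen r ↔ a ≤ r ∧ r ≤ b) ∧
  (∀ r, a ≤ r → r < b → μ.rowLen (r + 1) = ν.rowLen r + 1)

section Struct

variable {ν μ : YoungDiagram} {a b : ℕ}

private lemma rel_symm :
    Symmetric (fun x y => x ∈ skewCells ν μ ∧ y ∈ skewCells ν μ ∧ CellAdj x y) := by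
  intro x y ⟨h1, h2, h3⟩
  exact ⟨h2, h1, cellAdj_symm h3⟩

lemma isRibbon_of_rData (hle : ν ≤ μ) (hd : RData ν μ a b) : IsRibbon ν μ := by
  obtain ⟨hab, hocc, hstep⟩ := hd
  set S := skewCells ν μ with hS
  set rel := fun x y => x ∈ S ∧ y ∈ S ∧ CellAdj x y with hrel
  have hsymm : Symmetric (Relation.ReflTransGen rel) :=
    haveI : Std.Symm rel := ⟨fun _ _ h => rel_symm h⟩
    fun x y h => Relation.ReflTransGen.symmetric.symm x y h
  have hmem : ∀ r c, (r, c) ∈ S ↔ ν.rowLen r ≤ c ∧ c < μ.rowLen r := fun r c => mem_skewCells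
  have hanchor : ∀ r, a ≤ r → r ≤ b → (r, ν.rowLen r) ∈ S := by
    intro r h1 h2
    exact (hmem _ _).2 ⟨le_refl _, (hocc r).2 ⟨h1, h2⟩⟩
  -- within a row
  have hrow : ∀ r c, (r, c) ∈ S → Relation.ReflTransGen rel (r, ν.rowLen r) (r, c) := by
    intro r c hc
    rcases (hmem r c).1 hc with ⟨h1, h2⟩
    clear hc
    induction c with
    | zero =>
      have : ν.rowLen r = 0 := Nat.le_zero.1 h1
      rw [this]
    | succ c ih =>
      rcases Nat.lt_or_ge (ν.rowLen r) (c+1) with h3 | h3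
      · have hc : ν.rowLen r ≤ c := by omega
        have hcS : (r, c) ∈ S := (hmem _ _).2 ⟨hc, by omega⟩
        refine Relation.ReflTransGen.tail (ih hc (by omega)) ?_
        exact ⟨hcS, (hmem _ _).2 ⟨by omega, h2⟩, Or.inl ⟨rfl, Or.inl rfl⟩⟩
      · have : ν.rowLen r = c + 1 := le_antisymm h1 h3
        rw [this]
  -- from anchor of row r to anchor of row r+1
  have hdown : ∀ r, a ≤ r → r < b →
      Relation.ReflTransGen rel (r, ν.rowLen r) (r + 1, ν.rowLen (r + 1)) := by
    intro r h1 h2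
    have hB : μ.rowLen (r + 1) = ν.rowLen r + 1 := hstep r h1 h2
    have hmid : (r + 1, ν.rowLen r) ∈ S :=
      (hmem _ _).2 ⟨ν.rowLen_anti r (r+1) (by omega), by omega⟩
    have h1' : Relation.ReflTransGen rel (r, ν.rowLen r) (r + 1, ν.rowLen r) :=
      Relation.ReflTransGen.single
        ⟨hanchor r h1 (by omega), hmid, Or.inr ⟨rfl, Or.inl rfl⟩⟩
    exact h1'.trans (hsymm (hrow _ _ hmid))
  -- chain of anchors
  have hchain : ∀ r, a ≤ r → r ≤ b →
      Relation.ReflTransGen rel (a, ν.rowLen a) (r, ν.rowLen r) := by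
    intro r h1 h2
    induction r with
    | zero =>
      have : a = 0 := Nat.le_zero.1 h1
      subst this; rfl
    | succ r ih =>
      rcases Nat.lt_or_ge r a with h3 | h3
      · have : a = r + 1 := by omega
        subst this; rfl
      · exact (ih h3 (by omega)).trans (hdown r h3 (by omega))
  refine ⟨hle, ⟨(a, ν.rowLen a), hanchor a le_rfl hab⟩, ?_, ?_⟩
  · rintro ⟨ru, cu⟩ hu ⟨rv, cv⟩ hv
    have hu1 := (hmem _ _).1 hu
    have hv1 := (hmem _ _).1 hv
    have hou : a ≤ ru ∧ ru ≤ b := (hocc ru).1 (by omega)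
    have hov : a ≤ rv ∧ rv ≤ b := (hocc rv).1 (by omega)
    exact ((hsymm (hrow _ _ hu)).trans (hsymm (hchain ru hou.1 hou.2))).trans
      ((hchain rv hov.1 hov.2).trans (hrow _ _ hv))
  · rintro ⟨r, c, h1, h2, h3, h4⟩
    have e1 := (hmem _ _).1 h1
    have e2 := (hmem _ _).1 h2
    have e4 := (hmem _ _).1 h4
    have ho1 : a ≤ r ∧ r ≤ b := (hocc r).1 (by omega)
    have ho2 : a ≤ r + 1 ∧ r + 1 ≤ b := (hocc (r+1)).1 (by omega)
    have := hstep r ho1.1 (by omega)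
    omega

/-- a "crossing" lemma for paths -/
private lemma crossing {α : Type*} {rel : α → α → Prop} {P : α → Prop} {u w : α}
    (h : Relation.ReflTransGen rel u w) (hu : P u) (hw : ¬ P w) :
    ∃ x y, rel x y ∧ P x ∧ ¬ P y := by
  induction h with
  | refl => exact absurd hu hw
  | tail h1 h2 ih =>
    rename_i mid fin
    by_cases hm : P mid
    · exact ⟨mid, fin, h2, hm, hw⟩
    · exact ih hm

lemma rData_of_isRibbon (h : IsRibbon ν μ) : ∃ a b, RData ν μ a b := by
  obtain ⟨hle, hne, hconn, h22⟩ := h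
  have hmem : ∀ r c, (r, c) ∈ skewCells ν μ ↔ ν.rowLen r ≤ c ∧ c < μ.rowLen r :=
    fun r c => mem_skewCells
  have hlen : ∀ r, ν.rowLen r ≤ μ.rowLen r := le_iff_rowLen.1 hle
  set Occ : ℕ → Prop := fun r => ν.rowLen r < μ.rowLen r with hOcc
  obtain ⟨⟨r0, c0⟩, hr0⟩ := hne
  have hone : Occ r0 := by
    have := (hmem _ _).1 hr0
    simp only [hOcc]; omega
  have hOccBd : ∀ r, Occ r → r < μ.colLen 0 := by
    intro r hr
    by_contra hc
    push_neg at hc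
    have := rowLen_zero_of_le (μ := μ) hc
    simp only [hOcc] at hr; omega
  have hex : ∃ r, Occ r := ⟨r0, hone⟩
  classical
  set a := Nat.find hex with ha
  have haocc : Occ a := Nat.find_spec hex
  set b := Nat.findGreatest Occ (μ.colLen 0) with hb
  have hbocc : Occ b := Nat.findGreatest_spec (le_of_lt (hOccBd r0 hone)) hone
  have hble : ∀ r, Occ r → r ≤ b := fun r hr => Nat.le_findGreatest (hOccBd r hr).le hr
  have hab : a ≤ b := hble a haocc
  -- vertical crossing between consecutive rows
  have hcross : ∀ r, a ≤ r → r < b → ∃ c, (r, c) ∈ skewCells ν μ ∧ (r + 1, c) ∈ skewCells ν μ := by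
    intro r h1 h2
    have hua : (a, ν.rowLen a) ∈ skewCells ν μ := (hmem _ _).2 ⟨le_rfl, haocc⟩
    have hub : (b, ν.rowLen b) ∈ skewCells ν μ := (hmem _ _).2 ⟨le_rfl, hbocc⟩
    have hpath := hconn _ hua _ hub
    obtain ⟨⟨x1, x2⟩, ⟨y1, y2⟩, ⟨hx, hy, hadj⟩, hPx, hPy⟩ :=
      crossing (P := fun p => p.1 ≤ r) hpath (by simpa using h1) (by simp; omega)
    simp only at hPx hPy
    simp only [CellAdj] at hadj
    have hx1 : x1 = r ∧ y1 = r + 1 ∧ x2 = y2 := by omega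
    obtain ⟨rfl, rfl, rfl⟩ := hx1
    exact ⟨x2, hx, hy⟩
  have hover : ∀ r, a ≤ r → r < b → ν.rowLen r < μ.rowLen (r + 1) := by
    intro r h1 h2
    obtain ⟨c, hc1, hc2⟩ := hcross r h1 h2
    have e1 := (hmem _ _).1 hc1
    have e2 := (hmem _ _).1 hc2
    omega
  have hoccall : ∀ r, a ≤ r → r ≤ b → Occ r := by
    intro r
    induction r with
    | zero => intro h1 _; have : a = 0 := Nat.le_zero.1 h1; rw [← this]; exact haocc
    | succ r ih =>
      intro h1 h2
      rcases Nat.lt_or_ge r a with h3 | h3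
      · have : a = r + 1 := by omega
        rw [← this]; exact haocc
      · have hr : Occ r := ih h3 (by omega)
        have := hover r h3 (by omega)
        have := ν.rowLen_anti r (r+1) (by omega)
        simp only [hOcc]; omega
  refine ⟨a, b, hab, ?_, ?_⟩
  · intro r
    constructor
    · intro hr
      constructor
      · by_contra hc
        exact Nat.find_min hex (by omega) hr
      · exact hble r hr
    · intro ⟨h1, h2⟩
      exact hoccall r h1 h2
  · intro r h1 h2
    have hov := hover r h1 h2
    by_contra hc
    have hgt : ν.rowLen r + 1 < μ.rowLen (r + 1) := by omega
    apply h22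
    refine ⟨r, ν.rowLen r, ?_, ?_, ?_, ?_⟩
    · exact (hmem _ _).2 ⟨le_rfl, hoccall r h1 (by omega)⟩
    · exact (hmem _ _).2 ⟨ν.rowLen_anti r (r+1) (by omega), by omega⟩
    · have := μ.rowLen_anti r (r+1) (by omega)
      exact (hmem _ _).2 ⟨by omega, by omega⟩
    · exact (hmem _ _).2 ⟨by have := ν.rowLen_anti r (r+1) (by omega); omega, by omega⟩

end Struct

end Stmt10

namespace Stmt10

section Count

variable {ν μ : YoungDiagram} {a b : ℕ}

lemma skewCells_eq (hle : ν ≤ μ) (hd : RData ν μ a b) :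
    skewCells ν μ =
      (Finset.Icc a b).biUnion fun r => {r} ×ˢ Finset.Ico (ν.rowLen r) (μ.rowLen r) := by
  obtain ⟨hab, hocc, _⟩ := hd
  ext ⟨r, c⟩
  simp only [mem_skewCells, Finset.mem_biUnion, Finset.mem_Icc, Finset.mem_product,
    Finset.mem_singleton, Finset.mem_Ico]
  constructor
  · intro ⟨h1, h2⟩
    exact ⟨r, (hocc r).1 (by omega), rfl, h1, h2⟩
  · rintro ⟨r', _, rfl, h2, h3⟩
    exact ⟨h2, h3⟩

lemma card_skewCells (hle : ν ≤ μ) (hd : RData ν μ a b) :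
    ((skewCells ν μ).card : ℤ) =
      (μ.rowLen a : ℤ) - ν.rowLen b + (b - a) := by
  have hlen := le_iff_rowLen.1 hle
  rw [skewCells_eq hle hd]
  rw [Finset.card_biUnion]
  · have hcards : ∀ r ∈ Finset.Icc a b,
        ({r} ×ˢ Finset.Ico (ν.rowLen r) (μ.rowLen r)).card = μ.rowLen r - ν.rowLen r := by
      intro r _
      rw [Finset.card_product, Finset.card_singleton, one_mul, Nat.card_Ico]
    rw [Finset.sum_congr rfl hcards]
    obtain ⟨hab, hocc, hstep⟩ := hd
    rw [Nat.cast_sum]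
    have key : ∀ m, a ≤ m → (∀ r, a ≤ r → r < m → μ.rowLen (r + 1) = ν.rowLen r + 1) →
        ∑ r ∈ Finset.Icc a m, ((μ.rowLen r - ν.rowLen r : ℕ) : ℤ) =
          (μ.rowLen a : ℤ) - ν.rowLen m + (m - a) := by
      intro m hm
      induction m, hm using Nat.le_induction with
      | base =>
        intro _
        rw [Finset.Icc_self, Finset.sum_singleton]
        have := hlen a
        push_cast [Nat.cast_sub (hlen a)]
        ring
      | succ m hm ih =>
        intro hst
        rw [Finset.sum_Icc_succ_top (by omega)]
        rw [ih (fun r h1 h2 => hst r h1 (by omega))]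
        have h1 : μ.rowLen (m + 1) = ν.rowLen m + 1 := hst m hm (by omega)
        have h2 := hlen (m + 1)
        push_cast [Nat.cast_sub h2]
        rw [h1]
        push_cast
        ring
    exact key b hab hstep
  · intro r1 h1 r2 h2 hne
    simp only [Finset.disjoint_left]
    rintro ⟨p1, p2⟩ hp1 hp2
    simp only [Finset.mem_product, Finset.mem_singleton] at hp1 hp2
    exact hne (hp1.1 ▸ hp2.1 ▸ rfl)

lemma image_fst_skewCells (hle : ν ≤ μ) (hd : RData ν μ a b) :
    (skewCells ν μ).image Prod.fst = Finset.Icc a b := by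
  obtain ⟨hab, hocc, _⟩ := hd
  ext r
  simp only [Finset.mem_image, Finset.mem_Icc]
  constructor
  · rintro ⟨⟨r', c⟩, hp, rfl⟩
    have := mem_skewCells.1 hp
    exact (hocc r').1 (by omega)
  · intro hr
    exact ⟨(r, ν.rowLen r), mem_skewCells.2 ⟨le_rfl, (hocc r).2 hr⟩, rfl⟩

lemma skewHeight_eq (hle : ν ≤ μ) (hd : RData ν μ a b) : skewHeight ν μ = b - a := by
  rw [skewHeight, image_fst_skewCells hle hd, Nat.card_Icc]
  omega

lemma skewSign_eq (hle : ν ≤ μ) (hd : RData ν μ a b) : skewSign ν μ = (-1) ^ (b - a) := by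
  rw [skewSign, skewHeight_eq hle hd]

lemma rData_unique (hd : RData ν μ a b) {a' b' : ℕ} (hd' : RData ν μ a' b') :
    a = a' ∧ b = b' := by
  obtain ⟨hab, hocc, _⟩ := hd
  obtain ⟨hab', hocc', _⟩ := hd'
  have h1 := (hocc' a).1 ((hocc a).2 ⟨le_rfl, hab⟩)
  have h2 := (hocc a').1 ((hocc' a').2 ⟨le_rfl, hab'⟩)
  have h3 := (hocc' b).1 ((hocc b).2 ⟨hab, le_rfl⟩)
  have h4 := (hocc b').1 ((hocc' b').2 ⟨hab', le_rfl⟩)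
  omega

end Count

end Stmt10

namespace Stmt10

section XV

/-- the boundary function of a partition -/
def xv (lam : YoungDiagram) (r : ℕ) : ℤ := (lam.rowLen r : ℤ) - r

variable {lam : YoungDiagram}

lemma xv_strictAnti (lam : YoungDiagram) : StrictAnti (xv lam) := by
  apply strictAnti_nat_of_succ_lt
  intro r
  have := lam.rowLen_anti r (r + 1) (by omega)
  simp only [xv]
  push_cast
  omega

lemma xv_le (lam : YoungDiagram) (r : ℕ) : xv lam r ≤ xv lam 0 - r := by
  induction r with
  | zero => simp
  | succ r ih =>
    have := xv_strictAnti lam (show r < r + 1 by omega)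
    push_cast
    omega

lemma xv_neg_le (lam : YoungDiagram) (r : ℕ) : -(r : ℤ) ≤ xv lam r := by
  simp only [xv]
  have : (0 : ℤ) ≤ lam.rowLen r := Int.ofNat_nonneg _
  omega

lemma xv_of_colLen_le {r : ℕ} (h : lam.colLen 0 ≤ r) : xv lam r = -(r : ℤ) := by
  simp [xv, rowLen_zero_of_le h]

lemma xv_lt_iff {r s : ℕ} : xv lam r < xv lam s ↔ s < r :=
  (xv_strictAnti lam).lt_iff_gt

lemma xv_le_iff {r s : ℕ} : xv lam r ≤ xv lam s ↔ s ≤ r :=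
  (xv_strictAnti lam).le_iff_ge

lemma xv_inj {r s : ℕ} (h : xv lam r = xv lam s) : r = s :=
  (xv_strictAnti lam).injective h

/-- every integer `≤ -colLen` is a value of `xv` -/
lemma mem_range_xv_of_le {t : ℤ} (h : t ≤ -(lam.colLen 0 : ℤ)) : t ∈ Set.range (xv lam) := by
  refine ⟨(-t).toNat, ?_⟩
  have h0 : 0 ≤ -t := by
    have : (0:ℤ) ≤ (lam.colLen 0 : ℤ) := Int.ofNat_nonneg _
    omega
  have h1 : lam.colLen 0 ≤ (-t).toNat := by omega
  rw [xv_of_colLen_le h1]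
  omega

end XV

section Addable

/-- starting row of the addable ribbon whose last row is `b` -/
noncomputable def aOf (lam : YoungDiagram) (i : ℕ) (b : ℕ) : ℕ :=
  Nat.find (⟨b, Or.inr le_rfl⟩ : ∃ a, xv lam a < xv lam b + i ∨ b ≤ a)

variable {lam : YoungDiagram} {i : ℕ}

lemma aOf_le (b : ℕ) : aOf lam i b ≤ b :=
  Nat.find_le (Or.inr le_rfl)

lemma aOf_lt (hi : 1 ≤ i) (b : ℕ) : xv lam (aOf lam i b) < xv lam b + i := by
  rcases Nat.find_spec (⟨b, Or.inr le_rfl⟩ : ∃ a, xv lam a < xv lam b + i ∨ b ≤ a) with h | h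
  · exact h
  · have hb : aOf lam i b = b := le_antisymm (aOf_le b) h
    rw [hb]
    omega

lemma aOf_min {b r : ℕ} (h : r < aOf lam i b) : xv lam b + i ≤ xv lam r ∧ r < b := by
  have h2 := Nat.find_min (⟨b, Or.inr le_rfl⟩ : ∃ a, xv lam a < xv lam b + i ∨ b ≤ a) h
  push_neg at h2
  exact ⟨h2.1, h2.2⟩

lemma aOf_min' {b r : ℕ} (hQ : xv lam b + i ∉ Set.range (xv lam))
    (h : r < aOf lam i b) : xv lam b + i < xv lam r := by
  rcases lt_or_eq_of_le (aOf_min h).1 with h' | h'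
  · exact h'
  · exact absurd ⟨r, h'.symm⟩ hQ

/-- row lengths of the diagram obtained by adding a ribbon with last row `b` -/
noncomputable def fAdd (lam : YoungDiagram) (i : ℕ) (b : ℕ) (r : ℕ) : ℕ :=
  if r < aOf lam i b then lam.rowLen r
  else if r ≤ b then (if r = aOf lam i b then (xv lam b + i + aOf lam i b).toNat
    else lam.rowLen (r - 1) + 1)
  else lam.rowLen r

lemma fAdd_v_pos {b : ℕ} (hi : 1 ≤ i) :
    (lam.rowLen (aOf lam i b) : ℤ) < xv lam b + i + aOf lam i b := by
  have h := aOf_lt (lam := lam) hi b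
  simp only [xv] at h ⊢
  omega

lemma fAdd_anti {b : ℕ} (hi : 1 ≤ i) (hQ : xv lam b + i ∉ Set.range (xv lam)) (r : ℕ) :
    fAdd lam i b (r + 1) ≤ fAdd lam i b r := by
  have hab : aOf lam i b ≤ b := aOf_le b
  have hvpos := fAdd_v_pos (lam := lam) (b := b) hi
  have hanti : ∀ r s : ℕ, r ≤ s → lam.rowLen s ≤ lam.rowLen r := fun r s h =>
    lam.rowLen_anti r s h
  rcases Nat.lt_or_ge (r + 1) (aOf lam i b) with h1 | h1
  · simp only [fAdd, if_pos h1, if_pos (by omega : r < aOf lam i b)]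
    exact hanti r (r+1) (by omega)
  rcases Nat.lt_or_ge b (r + 1) with h2 | h2
  · rcases Nat.lt_or_ge b r with h3 | h3
    · simp only [fAdd, if_neg (by omega : ¬ r + 1 < aOf lam i b),
        if_neg (by omega : ¬ r + 1 ≤ b), if_neg (by omega : ¬ r < aOf lam i b),
        if_neg (by omega : ¬ r ≤ b)]
      exact hanti r (r+1) (by omega)
    · have hrb : r = b := by omega
      subst hrb
      simp only [fAdd, if_neg (by omega : ¬ r + 1 < aOf lam i r),
        if_neg (by omega : ¬ r + 1 ≤ r), if_neg (by omega : ¬ r < aOf lam i r),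
        if_pos (le_refl r)]
      by_cases hra : r = aOf lam i r
      · rw [if_pos hra]
        have h4 : xv lam (r+1) < xv lam r := xv_strictAnti lam (by omega)
        rw [← hra]
        simp only [xv] at h4 ⊢
        omega
      · rw [if_neg hra]
        have := hanti (r - 1) (r + 1) (by omega)
        omega
  · have hr1 : ¬ r + 1 < aOf lam i b := by omega
    rcases Nat.lt_or_ge r (aOf lam i b) with h3 | h3
    · have he : r + 1 = aOf lam i b := by omega
      simp only [fAdd, if_neg hr1, if_pos h2, if_pos he, if_pos h3]
      have h4 : xv lam b + i < xv lam r := aOf_min' hQ (by omega)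
      rw [← he]
      simp only [xv] at h4 ⊢
      omega
    · simp only [fAdd, if_neg hr1, if_pos h2, if_neg (by omega : ¬ r + 1 = aOf lam i b),
        if_neg (by omega : ¬ r < aOf lam i b), if_pos (by omega : r ≤ b)]
      by_cases hra : r = aOf lam i b
      · subst hra
        rw [if_pos rfl]
        simp only [Nat.add_sub_cancel] at *
        simp only [xv] at hvpos ⊢
        omega
      · rw [if_neg hra]
        have := hanti (r - 1) r (by omega)
        simp only [Nat.add_sub_cancel]
        omega

lemma fAdd_zero {b : ℕ} (r : ℕ) (h : b + 1 + lam.colLen 0 ≤ r) : fAdd lam i b r = 0 := by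
  have h1 : ¬ r < aOf lam i b := by have := aOf_le (lam := lam) (i := i) b; omega
  simp only [fAdd, if_neg h1, if_neg (by omega : ¬ r ≤ b)]
  exact rowLen_zero_of_le (by omega)

/-- the diagram obtained by adding the ribbon with last row `b` -/
noncomputable def addOf (lam : YoungDiagram) {i : ℕ} (hi : 1 ≤ i) (b : ℕ)
    (hQ : xv lam b + i ∉ Set.range (xv lam)) : YoungDiagram :=
  ofFn (fAdd lam i b) (fAdd_anti hi hQ) (b + 1 + lam.colLen 0) (fAdd_zero _ le_rfl)

variable (hi : 1 ≤ i) {b : ℕ} (hQ : xv lam b + i ∉ Set.range (xv lam))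

lemma rowLen_addOf (r : ℕ) : (addOf lam hi b hQ).rowLen r = fAdd lam i b r :=
  rowLen_ofFn r

lemma le_addOf : lam ≤ addOf lam hi b hQ := by
  rw [le_iff_rowLen]
  intro r
  rw [rowLen_addOf hi hQ]
  rcases Nat.lt_or_ge r (aOf lam i b) with h1 | h1
  · simp [fAdd, if_pos h1]
  rcases Nat.lt_or_ge b r with h2 | h2
  · simp only [fAdd, if_neg (by omega : ¬ r < aOf lam i b), if_neg (by omega : ¬ r ≤ b)]
    exact le_rfl
  · simp only [fAdd, if_neg (by omega : ¬ r < aOf lam i b), if_pos h2]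
    by_cases hra : r = aOf lam i b
    · rw [if_pos hra]
      have h4 := fAdd_v_pos (lam := lam) (b := b) hi
      rw [← hra] at h4
      omega
    · rw [if_neg hra]
      have := lam.rowLen_anti (r-1) r (by omega)
      omega

lemma rData_addOf : RData lam (addOf lam hi b hQ) (aOf lam i b) b := by
  have hab : aOf lam i b ≤ b := aOf_le b
  refine ⟨hab, ?_, ?_⟩
  · intro r
    rw [rowLen_addOf hi hQ]
    rcases Nat.lt_or_ge r (aOf lam i b) with h1 | h1
    · simp only [fAdd, if_pos h1]
      omega
    rcases Nat.lt_or_ge b r with h2 | h2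
    · simp only [fAdd, if_neg (by omega : ¬ r < aOf lam i b), if_neg (by omega : ¬ r ≤ b)]
      omega
    · simp only [fAdd, if_neg (by omega : ¬ r < aOf lam i b), if_pos h2]
      by_cases hra : r = aOf lam i b
      · rw [if_pos hra]
        have h4 := fAdd_v_pos (lam := lam) (b := b) hi
        rw [← hra] at h4
        constructor
        · intro _; omega
        · intro _; omega
      · rw [if_neg hra]
        have := lam.rowLen_anti (r-1) r (by omega)
        constructor
        · intro _; omega
        · intro _; omega
  · intro r h1 h2
    rw [rowLen_addOf hi hQ]
    simp only [fAdd, if_neg (by omega : ¬ r + 1 < aOf lam i b), if_pos (by omega : r + 1 ≤ b),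
      if_neg (by omega : ¬ r + 1 = aOf lam i b), Nat.add_sub_cancel]

lemma card_addOf : ((skewCells lam (addOf lam hi b hQ)).card : ℤ) = i := by
  rw [card_skewCells (le_addOf hi hQ) (rData_addOf hi hQ)]
  rw [rowLen_addOf hi hQ]
  have hab : aOf lam i b ≤ b := aOf_le b
  have h4 := fAdd_v_pos (lam := lam) (b := b) hi
  simp only [fAdd, if_neg (by omega : ¬ aOf lam i b < aOf lam i b), if_pos hab, if_pos rfl,
    if_true]
  simp only [xv] at h4 ⊢
  omega

lemma isRibbon_addOf : IsRibbon lam (addOf lam hi b hQ) :=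
  isRibbon_of_rData (le_addOf hi hQ) (rData_addOf hi hQ)

lemma sign_addOf : skewSign lam (addOf lam hi b hQ) = (-1) ^ (b - aOf lam i b) :=
  skewSign_eq (le_addOf hi hQ) (rData_addOf hi hQ)

end Addable

end Stmt10

namespace Stmt10

section AddableInv

variable {lam μ : YoungDiagram} {i : ℕ}

lemma addable_inverse (hi : 1 ≤ i) (h : IsRibbon lam μ) (hc : (skewCells lam μ).card = i) :
    ∃ (b : ℕ) (hQ : xv lam b + i ∉ Set.range (xv lam)), μ = addOf lam hi b hQ := by
  obtain ⟨a, b, hd⟩ := rData_of_isRibbon h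
  have hle := h.1
  have hlen := le_iff_rowLen.1 hle
  obtain ⟨hab, hocc, hstep⟩ := hd
  have hd' : RData lam μ a b := ⟨hab, hocc, hstep⟩
  have hout : ∀ r, ¬ (a ≤ r ∧ r ≤ b) → lam.rowLen r = μ.rowLen r := by
    intro r h2
    have h3 : ¬ lam.rowLen r < μ.rowLen r := fun hl => h2 ((hocc r).1 hl)
    have := hlen r
    omega
  have hocca : lam.rowLen a < μ.rowLen a := (hocc a).2 ⟨le_rfl, hab⟩
  -- the length of the first row of the ribbon
  have hBa : (μ.rowLen a : ℤ) = (lam.rowLen b : ℤ) - b + i + a := by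
    have := card_skewCells hle hd'
    rw [hc] at this
    omega
  have hkey : ∀ r, r < a → (lam.rowLen b : ℤ) - b + i < (lam.rowLen r : ℤ) - r := by
    intro r hr
    have h1 : lam.rowLen r = μ.rowLen r := hout r (by omega)
    have h2 : μ.rowLen a ≤ μ.rowLen r := μ.rowLen_anti r a (by omega)
    omega
  have hQ : xv lam b + i ∉ Set.range (xv lam) := by
    rintro ⟨r, hr⟩
    simp only [xv] at hr
    have h2 : r < a := by
      have h3 : xv lam a < xv lam r := by
        simp only [xv]
        omega
      exact xv_lt_iff.1 h3
    have := hkey r h2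
    omega
  have haOf : a = aOf lam i b := by
    refine le_antisymm ?_ (Nat.find_le ?_)
    · by_contra hcon
      push_neg at hcon
      have h1 := aOf_lt (lam := lam) hi b
      have h2 := hkey _ hcon
      simp only [xv] at h1
      omega
    · left
      simp only [xv]
      omega
  refine ⟨b, hQ, ?_⟩
  apply ext_rowLen
  intro r
  rw [rowLen_addOf hi hQ]
  rw [fAdd, ← haOf]
  rcases Nat.lt_or_ge r a with h1 | h1
  · rw [if_pos h1]
    exact (hout r (by omega)).symm
  rcases Nat.lt_or_ge b r with h2 | h2
  · rw [if_neg (by omega), if_neg (by omega)]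
    exact (hout r (by omega)).symm
  · rw [if_neg (by omega), if_pos h2]
    by_cases hra : r = a
    · rw [if_pos hra]
      subst hra
      simp only [xv]
      omega
    · rw [if_neg hra]
      have h3 := hstep (r - 1) (by omega) (by omega)
      have h4 : r - 1 + 1 = r := by omega
      rw [h4] at h3
      omega

/-- recover `b` from the diagram -/
lemma addOf_inj (hi : 1 ≤ i) {b b' : ℕ} (hQ : xv lam b + i ∉ Set.range (xv lam))
    (hQ' : xv lam b' + i ∉ Set.range (xv lam))
    (h : addOf lam hi b hQ = addOf lam hi b' hQ') : b = b' := by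
  have h1 := rData_addOf hi hQ
  have h2 := rData_addOf hi hQ'
  rw [h] at h1
  exact (rData_unique h1 h2).2

end AddableInv

end Stmt10

namespace Stmt10

section Removable

/-- last row of the removable ribbon whose first row is `a` -/
def bOfR (lam : YoungDiagram) (i : ℕ) (a : ℕ) : ℕ :=
  Nat.findGreatest (fun r => xv lam a - i < xv lam r) (lam.rowLen 0 + a + i)

variable {lam : YoungDiagram} {i : ℕ}

lemma bOfR_bound {a r : ℕ} (h : xv lam a - i < xv lam r) : r < lam.rowLen 0 + a + i := by
  have h1 := xv_le lam r
  have h2 := xv_neg_le lam a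
  simp only [xv] at h h1 h2 ⊢
  omega

lemma le_bOfR (hi : 1 ≤ i) (a : ℕ) : a ≤ bOfR lam i a := by
  apply Nat.le_findGreatest
  · have : xv lam a - i < xv lam a := by omega
    exact (bOfR_bound this).le
  · omega

lemma bOfR_lt (hi : 1 ≤ i) (a : ℕ) : xv lam a - i < xv lam (bOfR lam i a) := by
  have hb : xv lam a - (i : ℤ) < xv lam a := by omega
  exact Nat.findGreatest_spec (P := fun r => xv lam a - (i : ℤ) < xv lam r)
    (bOfR_bound hb).le hb

lemma bOfR_max (hi : 1 ≤ i) {a r : ℕ} (h : bOfR lam i a < r) : xv lam r ≤ xv lam a - i := by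
  by_contra hc
  push_neg at hc
  exact Nat.findGreatest_is_greatest (P := fun r => xv lam a - (i : ℤ) < xv lam r)
    h (bOfR_bound hc).le hc

lemma bOfR_max' (hi : 1 ≤ i) {a r : ℕ} (hQ : xv lam a - i ∉ Set.range (xv lam))
    (h : bOfR lam i a < r) : xv lam r < xv lam a - i := by
  rcases lt_or_eq_of_le (bOfR_max hi h) with h' | h'
  · exact h'
  · exact absurd ⟨r, h'⟩ hQ

lemma bOfR_nonneg (hi : 1 ≤ i) {a : ℕ} (hQ : xv lam a - i ∉ Set.range (xv lam)) :
    0 ≤ xv lam a - i + bOfR lam i a := by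
  have h1 := bOfR_max' hi hQ (show bOfR lam i a < bOfR lam i a + 1 by omega)
  have h2 := xv_neg_le lam (bOfR lam i a + 1)
  push_cast at h2
  omega

lemma bOfR_rowLen_pos (hi : 1 ≤ i) {a : ℕ} (hQ : xv lam a - i ∉ Set.range (xv lam))
    {r : ℕ} (hr : r ≤ bOfR lam i a) : 1 ≤ lam.rowLen r := by
  have h1 := bOfR_lt (lam := lam) hi a
  have h2 := bOfR_nonneg hi hQ
  have h3 := lam.rowLen_anti r (bOfR lam i a) hr
  simp only [xv] at h1 h2
  omega

/-- row lengths of the diagram obtained by removing a ribbon with first row `a` -/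
def fRem (lam : YoungDiagram) (i : ℕ) (a : ℕ) (r : ℕ) : ℕ :=
  if r < a then lam.rowLen r
  else if r < bOfR lam i a then lam.rowLen (r + 1) - 1
  else if r = bOfR lam i a then (xv lam a - i + bOfR lam i a).toNat
  else lam.rowLen r

lemma fRem_anti {a : ℕ} (hi : 1 ≤ i) (hQ : xv lam a - i ∉ Set.range (xv lam)) (r : ℕ) : fRem lam i a (r + 1) ≤ fRem lam i a r := by
  have hab : a ≤ bOfR lam i a := le_bOfR hi a
  have hb1 := bOfR_lt (lam := lam) hi a
  have hb3 := bOfR_max' hi hQ (show bOfR lam i a < bOfR lam i a + 1 by omega)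
  have hnn := bOfR_nonneg hi hQ
  have hanti : ∀ r s : ℕ, r ≤ s → lam.rowLen s ≤ lam.rowLen r := fun r s h =>
    lam.rowLen_anti r s h
  rcases Nat.lt_or_ge (r + 1) a with h1 | h1
  · simp only [fRem, if_pos h1, if_pos (by omega : r < a)]
    exact hanti r (r + 1) (by omega)
  rcases Nat.lt_or_ge (r + 1) (bOfR lam i a) with h2 | h2
  · -- r + 1 in the middle zone
    rcases Nat.lt_or_ge r a with h3 | h3
    · -- r = a - 1
      simp only [fRem, if_neg (by omega : ¬ r + 1 < a), if_pos h2, if_pos h3]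
      have := hanti r (r + 1 + 1) (by omega)
      omega
    · simp only [fRem, if_neg (by omega : ¬ r + 1 < a), if_pos h2,
        if_neg (by omega : ¬ r < a), if_pos (by omega : r < bOfR lam i a)]
      have := hanti (r + 1) (r + 1 + 1) (by omega)
      omega
  rcases Nat.lt_or_ge r (bOfR lam i a) with h3 | h3
  · -- r + 1 = bOfR
    have he : r + 1 = bOfR lam i a := by omega
    rcases Nat.lt_or_ge r a with h4 | h4
    · -- a = bOfR = r + 1 impossible since a ≤ r+1 = bOfR and r < a means a = r+1 = bOfR
      simp only [fRem, if_neg (by omega : ¬ r + 1 < a), if_neg (by omega : ¬ r + 1 < bOfR lam i a),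
        if_pos he, if_pos h4]
      simp only [xv] at hb1 hnn ⊢
      have := hanti r a (by omega)
      omega
    · simp only [fRem, if_neg (by omega : ¬ r + 1 < a), if_neg (by omega : ¬ r + 1 < bOfR lam i a),
        if_pos he, if_neg (by omega : ¬ r < a), if_pos (by omega : r < bOfR lam i a)]
      rw [he]
      simp only [xv] at hb1 hnn ⊢
      omega
  rcases Nat.lt_or_ge (bOfR lam i a) r with h4 | h4
  · -- both above bOfR
    simp only [fRem, if_neg (by omega : ¬ r + 1 < a), if_neg (by omega : ¬ r + 1 < bOfR lam i a),
      if_neg (by omega : ¬ r + 1 = bOfR lam i a), if_neg (by omega : ¬ r < a),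
      if_neg (by omega : ¬ r < bOfR lam i a), if_neg (by omega : ¬ r = bOfR lam i a)]
    exact hanti r (r + 1) (by omega)
  · -- r = bOfR
    have he : r = bOfR lam i a := by omega
    simp only [fRem, if_neg (by omega : ¬ r + 1 < a), if_neg (by omega : ¬ r + 1 < bOfR lam i a),
      if_neg (by omega : ¬ r + 1 = bOfR lam i a), if_neg (by omega : ¬ r < a),
      if_neg (by omega : ¬ r < bOfR lam i a), if_pos he]
    have h5 := bOfR_max' hi hQ (show bOfR lam i a < r + 1 by omega)
    rw [← he]
    simp only [xv] at h5 ⊢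
    omega

lemma fRem_zero {a : ℕ} (hi : 1 ≤ i) (r : ℕ) (h : bOfR lam i a + 1 + lam.colLen 0 ≤ r) : fRem lam i a r = 0 := by
  have hab : a ≤ bOfR lam i a := le_bOfR hi a
  simp only [fRem, if_neg (by omega : ¬ r < a), if_neg (by omega : ¬ r < bOfR lam i a),
    if_neg (by omega : ¬ r = bOfR lam i a)]
  exact rowLen_zero_of_le (by omega)

variable (hi : 1 ≤ i) {a : ℕ} (hQ : xv lam a - i ∉ Set.range (xv lam))

/-- the diagram obtained by removing the ribbon with first row `a` -/
noncomputable def remOf (lam : YoungDiagram) {i : ℕ} (hi : 1 ≤ i) (a : ℕ)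
    (hQ : xv lam a - i ∉ Set.range (xv lam)) : YoungDiagram :=
  ofFn (fRem lam i a) (fRem_anti hi hQ) (bOfR lam i a + 1 + lam.colLen 0) (fRem_zero hi _ le_rfl)

lemma rowLen_remOf (r : ℕ) : (remOf lam hi a hQ).rowLen r = fRem lam i a r :=
  rowLen_ofFn r

lemma remOf_le : remOf lam hi a hQ ≤ lam := by
  rw [le_iff_rowLen]
  intro r
  rw [rowLen_remOf hi hQ]
  have hb1 := bOfR_lt (lam := lam) hi a
  rcases Nat.lt_or_ge r a with h1 | h1
  · simp only [fRem, if_pos h1]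
    exact le_rfl
  rcases Nat.lt_or_ge r (bOfR lam i a) with h2 | h2
  · simp only [fRem, if_neg (by omega : ¬ r < a), if_pos h2]
    have := lam.rowLen_anti r (r + 1) (by omega)
    omega
  rcases Nat.lt_or_ge (bOfR lam i a) r with h3 | h3
  · simp only [fRem, if_neg (by omega : ¬ r < a), if_neg (by omega : ¬ r < bOfR lam i a),
      if_neg (by omega : ¬ r = bOfR lam i a)]
    exact le_rfl
  · have he : r = bOfR lam i a := by omega
    simp only [fRem, if_neg (by omega : ¬ r < a), if_neg (by omega : ¬ r < bOfR lam i a),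
      if_pos he]
    rw [he]
    simp only [xv] at hb1 ⊢
    omega

lemma rData_remOf : RData (remOf lam hi a hQ) lam a (bOfR lam i a) := by
  have hab : a ≤ bOfR lam i a := le_bOfR hi a
  have hb1 := bOfR_lt (lam := lam) hi a
  refine ⟨hab, ?_, ?_⟩
  · intro r
    rw [rowLen_remOf hi hQ]
    rcases Nat.lt_or_ge r a with h1 | h1
    · simp only [fRem, if_pos h1]
      omega
    rcases Nat.lt_or_ge r (bOfR lam i a) with h2 | h2
    · simp only [fRem, if_neg (by omega : ¬ r < a), if_pos h2]
      have h3 := bOfR_rowLen_pos hi hQ (show r + 1 ≤ bOfR lam i a by omega)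
      have := lam.rowLen_anti r (r + 1) (by omega)
      omega
    rcases Nat.lt_or_ge (bOfR lam i a) r with h3 | h3
    · simp only [fRem, if_neg (by omega : ¬ r < a), if_neg (by omega : ¬ r < bOfR lam i a),
        if_neg (by omega : ¬ r = bOfR lam i a)]
      omega
    · have he : r = bOfR lam i a := by omega
      subst he
      simp only [fRem, if_neg (by omega : ¬ bOfR lam i a < a),
        if_neg (lt_irrefl (bOfR lam i a)), if_pos rfl, if_true]
      have hnn := bOfR_nonneg hi hQ
      simp only [xv] at hb1 hnn ⊢
      constructor
      · intro _; omega
      · intro _; omega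
  · intro r hr1 hr2
    rw [rowLen_remOf hi hQ]
    simp only [fRem, if_neg (by omega : ¬ r < a), if_pos hr2]
    have h3 := bOfR_rowLen_pos hi hQ (show r + 1 ≤ bOfR lam i a by omega)
    omega

lemma card_remOf : ((skewCells (remOf lam hi a hQ) lam).card : ℤ) = i := by
  rw [card_skewCells (remOf_le hi hQ) (rData_remOf hi hQ)]
  rw [rowLen_remOf hi hQ]
  have hab : a ≤ bOfR lam i a := le_bOfR hi a
  have hnn := bOfR_nonneg hi hQ
  simp only [fRem, if_neg (by omega : ¬ bOfR lam i a < a),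
    if_neg (by omega : ¬ bOfR lam i a < bOfR lam i a), if_pos rfl, if_true]
  simp only [xv] at hnn ⊢
  omega

lemma isRibbon_remOf : IsRibbon (remOf lam hi a hQ) lam :=
  isRibbon_of_rData (remOf_le hi hQ) (rData_remOf hi hQ)

lemma sign_remOf : skewSign (remOf lam hi a hQ) lam = (-1) ^ (bOfR lam i a - a) :=
  skewSign_eq (remOf_le hi hQ) (rData_remOf hi hQ)

end Removable

section RemovableInv

variable {lam ν : YoungDiagram} {i : ℕ}

lemma removable_inverse (hi : 1 ≤ i) (h : IsRibbon ν lam) (hc : (skewCells ν lam).card = i) :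
    ∃ (a : ℕ) (hQ : xv lam a - i ∉ Set.range (xv lam)), ν = remOf lam hi a hQ := by
  obtain ⟨a, b, hd⟩ := rData_of_isRibbon h
  have hle := h.1
  have hlen := le_iff_rowLen.1 hle
  obtain ⟨hab, hocc, hstep⟩ := hd
  have hd' : RData ν lam a b := ⟨hab, hocc, hstep⟩
  have hout : ∀ r, ¬ (a ≤ r ∧ r ≤ b) → ν.rowLen r = lam.rowLen r := by
    intro r h2
    have h3 : ¬ ν.rowLen r < lam.rowLen r := fun hl => h2 ((hocc r).1 hl)
    have := hlen r
    omega
  have hoccb : ν.rowLen b < lam.rowLen b := (hocc b).2 ⟨hab, le_rfl⟩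
  have hνb : (ν.rowLen b : ℤ) = (lam.rowLen a : ℤ) - a - i + b := by
    have := card_skewCells hle hd'
    rw [hc] at this
    omega
  have hkey : ∀ r, b < r → (lam.rowLen r : ℤ) - r < (lam.rowLen a : ℤ) - a - i := by
    intro r hr
    have h1 : ν.rowLen r = lam.rowLen r := hout r (by omega)
    have h2 : ν.rowLen r ≤ ν.rowLen b := ν.rowLen_anti b r (by omega)
    omega
  have hQ : xv lam a - i ∉ Set.range (xv lam) := by
    rintro ⟨r, hr⟩
    simp only [xv] at hr
    have h2 : b < r := by
      have h3 : xv lam r < xv lam b := by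
        simp only [xv]
        omega
      exact xv_lt_iff.1 h3
    have := hkey r h2
    omega
  have hbOf : b = bOfR lam i a := by
    refine le_antisymm (Nat.le_findGreatest ?_ ?_) ?_
    · refine (bOfR_bound (a := a) ?_).le
      simp only [xv]
      omega
    · simp only [xv]
      omega
    · by_contra hcon
      push_neg at hcon
      have h1 := bOfR_lt (lam := lam) hi a
      have h2 := hkey _ hcon
      simp only [xv] at h1
      omega
  refine ⟨a, hQ, ?_⟩
  apply ext_rowLen
  intro r
  rw [rowLen_remOf hi hQ]
  rw [fRem, ← hbOf]
  rcases Nat.lt_or_ge r a with h1 | h1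
  · rw [if_pos h1]
    exact hout r (by omega)
  rcases Nat.lt_or_ge r b with h2 | h2
  · rw [if_neg (by omega), if_pos h2]
    have h3 := hstep r (by omega) (by omega)
    omega
  rcases Nat.lt_or_ge b r with h3 | h3
  · rw [if_neg (by omega), if_neg (by omega), if_neg (by omega)]
    exact hout r (by omega)
  · have he : r = b := by omega
    rw [if_neg (by omega), if_neg (by omega), if_pos he]
    subst he
    simp only [xv]
    omega

lemma remOf_inj (hi : 1 ≤ i) {a a' : ℕ} (hQ : xv lam a - i ∉ Set.range (xv lam))
    (hQ' : xv lam a' - i ∉ Set.range (xv lam))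
    (h : remOf lam hi a hQ = remOf lam hi a' hQ') : a = a' := by
  have h1 := rData_remOf hi hQ
  have h2 := rData_remOf hi hQ'
  rw [h] at h1
  exact (rData_unique h1 h2).1

end RemovableInv

end Stmt10

namespace Stmt10

section Cnt

open scoped Classical

variable (lam : YoungDiagram) (i : ℕ)

/-- upper bound for relevant rows -/
def BB : ℕ := lam.rowLen 0 + lam.colLen 0 + i + 1

/-- left end of the telescoping window -/
def LL : ℤ := -((lam.colLen 0 : ℤ) + i)

/-- number of rows whose boundary value lies in `[t, t+i)` -/
def cnt (t : ℤ) : ℕ :=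
  ((Finset.range (BB lam i)).filter fun r => t ≤ xv lam r ∧ xv lam r < t + i).card

/-- number of rows whose boundary value is `t` -/
def dc (t : ℤ) : ℕ :=
  ((Finset.range (BB lam i)).filter fun r => xv lam r = t).card

variable {lam i}

lemma row_lt_BB {t : ℤ} (ht : LL lam i ≤ t) {r : ℕ} (hr : t ≤ xv lam r) : r < BB lam i := by
  have h1 := xv_le lam r
  simp only [xv, LL] at h1 ht hr
  simp only [BB]
  omega

lemma dc_eq {t : ℤ} (ht : LL lam i ≤ t) :
    dc lam i t = if t ∈ Set.range (xv lam) then 1 else 0 := by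
  by_cases h : t ∈ Set.range (xv lam)
  · obtain ⟨r, hr⟩ := h
    rw [if_pos ⟨r, hr⟩]
    rw [dc, Finset.card_eq_one]
    refine ⟨r, ?_⟩
    ext r'
    simp only [Finset.mem_filter, Finset.mem_range, Finset.mem_singleton]
    constructor
    · intro ⟨_, h2⟩
      exact xv_inj (h2.trans hr.symm)
    · rintro rfl
      exact ⟨row_lt_BB ht hr.ge, hr⟩
  · rw [if_neg h, dc, Finset.card_eq_zero]
    rw [Finset.filter_eq_empty_iff]
    intro r _ hr
    exact h ⟨r, hr⟩

lemma cnt_split_lo (hi : 1 ≤ i) (t : ℤ) :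
    cnt lam i t =
      dc lam i t + ((Finset.range (BB lam i)).filter
        fun r => t + 1 ≤ xv lam r ∧ xv lam r < t + i).card := by
  rw [cnt, dc, ← Finset.card_union_of_disjoint]
  · congr 1
    rw [← Finset.filter_or]
    apply Finset.filter_congr
    intro r _
    constructor
    · intro ⟨h1, h2⟩
      rcases eq_or_lt_of_le h1 with h3 | h3
      · exact Or.inl h3.symm
      · exact Or.inr ⟨by omega, h2⟩
    · intro h
      rcases h with h | ⟨h1, h2⟩
      · constructor <;> omega
      · constructor <;> omega
  · rw [Finset.disjoint_filter]
    intro r _ h1 h2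
    omega

lemma cnt_split_hi (hi : 1 ≤ i) (t : ℤ) :
    cnt lam i (t + 1) =
      ((Finset.range (BB lam i)).filter
        fun r => t + 1 ≤ xv lam r ∧ xv lam r < t + i).card + dc lam i (t + i) := by
  rw [cnt, dc, ← Finset.card_union_of_disjoint]
  · congr 1
    rw [← Finset.filter_or]
    apply Finset.filter_congr
    intro r _
    constructor
    · intro ⟨h1, h2⟩
      rcases lt_or_eq_of_le (show xv lam r ≤ t + i by omega) with h3 | h3
      · exact Or.inl ⟨h1, h3⟩
      · exact Or.inr h3
    · intro h
      rcases h with ⟨h1, h2⟩ | h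
      · constructor <;> omega
      · constructor <;> omega
  · rw [Finset.disjoint_filter]
    intro r _ h1 h2
    omega

lemma cnt_LL (hi : 1 ≤ i) : cnt lam i (LL lam i) = i := by
  have hcard : ((Finset.range (BB lam i)).filter
      fun r => LL lam i ≤ xv lam r ∧ xv lam r < LL lam i + i) =
      Finset.Icc (lam.colLen 0 + 1) (lam.colLen 0 + i) := by
    ext r
    simp only [Finset.mem_filter, Finset.mem_range, Finset.mem_Icc]
    constructor
    · intro ⟨_, h1, h2⟩
      have h3 : lam.colLen 0 < r := by
        by_contra hc
        push_neg at hc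
        have h4 : xv lam (lam.colLen 0) ≤ xv lam r := xv_le_iff.2 hc
        rw [xv_of_colLen_le le_rfl] at h4
        simp only [LL] at h2
        omega
      have h5 : xv lam r = -(r : ℤ) := xv_of_colLen_le (by omega)
      simp only [LL] at h1
      omega
    · intro ⟨h1, h2⟩
      have h5 : xv lam r = -(r : ℤ) := xv_of_colLen_le (by omega)
      simp only [LL, BB]
      refine ⟨by omega, by omega, by omega⟩
  rw [cnt, hcard, Nat.card_Icc]
  omega

lemma cnt_top : cnt lam i (LL lam i + BB lam i) = 0 := by
  rw [cnt, Finset.card_eq_zero, Finset.filter_eq_empty_iff]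
  intro r _
  have h1 := xv_le lam r
  simp only [xv, LL, BB] at h1 ⊢
  push_cast
  intro h2
  omega

/-- count for an addable position -/
lemma cnt_addable (hi : 1 ≤ i) {b : ℕ} (hQ : xv lam b + i ∉ Set.range (xv lam)) :
    cnt lam i (xv lam b) = b - aOf lam i b + 1 := by
  have hblt : b < lam.colLen 0 + i := by
    by_contra hc
    push_neg at hc
    apply hQ
    rw [xv_of_colLen_le (by omega)]
    apply mem_range_xv_of_le
    push_cast
    omega
  have hbB : b < BB lam i := by
    have h1 := xv_neg_le lam b
    exact row_lt_BB (t := xv lam b) (by simp only [LL]; omega) le_rfl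
  have hab : aOf lam i b ≤ b := aOf_le b
  have hcard : ((Finset.range (BB lam i)).filter
      fun r => xv lam b ≤ xv lam r ∧ xv lam r < xv lam b + i) =
      Finset.Icc (aOf lam i b) b := by
    ext r
    simp only [Finset.mem_filter, Finset.mem_range, Finset.mem_Icc]
    constructor
    · intro ⟨_, h1, h2⟩
      constructor
      · by_contra hc
        push_neg at hc
        have := aOf_min' hQ hc
        omega
      · exact xv_le_iff.1 h1
    · intro ⟨h1, h2⟩
      have h3 : xv lam r ≤ xv lam (aOf lam i b) := xv_le_iff.2 h1
      have h4 := aOf_lt (lam := lam) hi b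
      refine ⟨?_, xv_le_iff.2 h2, by omega⟩
      exact lt_of_le_of_lt (show r ≤ b by omega) hbB
  rw [cnt, hcard, Nat.card_Icc]
  omega

/-- count for a removable position -/
lemma cnt_removable (hi : 1 ≤ i) {a : ℕ} (hQ : xv lam a - i ∉ Set.range (xv lam)) :
    cnt lam i (xv lam a - i) = bOfR lam i a - a := by
  have hab : a ≤ bOfR lam i a := le_bOfR hi a
  have halt : a < lam.colLen 0 := by
    by_contra hc
    push_neg at hc
    apply hQ
    rw [xv_of_colLen_le (by omega)]
    apply mem_range_xv_of_le
    push_cast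
    omega
  have hbB : bOfR lam i a < BB lam i := by
    have h1 := bOfR_lt (lam := lam) hi a
    have h2 := xv_neg_le lam a
    refine row_lt_BB (t := xv lam a - i) ?_ h1.le
    simp only [LL]
    omega
  have hcard : ((Finset.range (BB lam i)).filter
      fun r => xv lam a - i ≤ xv lam r ∧ xv lam r < xv lam a - i + i) =
      Finset.Icc (a + 1) (bOfR lam i a) := by
    ext r
    simp only [Finset.mem_filter, Finset.mem_range, Finset.mem_Icc]
    constructor
    · intro ⟨_, h1, h2⟩
      constructor
      · have h3 : xv lam r < xv lam a := by omega
        exact xv_lt_iff.1 h3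
      · by_contra hc
        push_neg at hc
        have := bOfR_max' hi hQ hc
        omega
    · intro ⟨h1, h2⟩
      have h3 : xv lam (bOfR lam i a) ≤ xv lam r := xv_le_iff.2 h2
      have h4 : xv lam r < xv lam a := xv_lt_iff.2 (by omega)
      have h5 := bOfR_lt (lam := lam) hi a
      refine ⟨lt_of_le_of_lt h2 hbB, by omega, by omega⟩
  rw [cnt, hcard, Nat.card_Icc]
  omega

variable (lam i) in
/-- the telescoping function -/
def FF (t : ℤ) : ℤ := (-1) ^ (cnt lam i t)

/-- the key step identity -/
lemma FF_step (hi : 1 ≤ i) {t : ℤ} (ht : LL lam i ≤ t) :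
    FF lam i (t + 1) - FF lam i t =
      (if t ∈ Set.range (xv lam) ∧ t + i ∉ Set.range (xv lam)
        then 2 * (-1) ^ (cnt lam i t - 1) else 0)
      - (if t ∉ Set.range (xv lam) ∧ t + i ∈ Set.range (xv lam)
        then 2 * (-1) ^ (cnt lam i t) else 0) := by
  have hlo := cnt_split_lo (lam := lam) hi t
  have hhi := cnt_split_hi (lam := lam) hi t
  have hdt := dc_eq (lam := lam) (i := i) ht
  have hdti := dc_eq (lam := lam) (i := i) (show LL lam i ≤ t + i by omega)
  set m := ((Finset.range (BB lam i)).filter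
    fun r => t + 1 ≤ xv lam r ∧ xv lam r < t + i).card with hm
  by_cases h1 : t ∈ Set.range (xv lam) <;> by_cases h2 : t + i ∈ Set.range (xv lam)
  · rw [if_pos h1] at hdt
    rw [if_pos h2] at hdti
    rw [if_neg (fun hcon => hcon.2 h2), if_neg (fun hcon => hcon.1 h1)]
    have e1 : cnt lam i t = 1 + m := by omega
    have e2 : cnt lam i (t + 1) = m + 1 := by omega
    simp only [FF, e1, e2]
    rw [pow_add, pow_succ]
    ring
  · rw [if_pos h1] at hdt
    rw [if_neg h2] at hdti
    rw [if_pos ⟨h1, h2⟩, if_neg (fun hcon => hcon.1 h1)]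
    have e1 : cnt lam i t = 1 + m := by omega
    have e2 : cnt lam i (t + 1) = m := by omega
    simp only [FF, e1, e2]
    rw [show 1 + m - 1 = m from by omega, pow_add]
    ring
  · rw [if_neg h1] at hdt
    rw [if_pos h2] at hdti
    rw [if_neg (fun hcon => h1 hcon.1), if_pos ⟨h1, h2⟩]
    have e1 : cnt lam i t = m := by omega
    have e2 : cnt lam i (t + 1) = m + 1 := by omega
    simp only [FF, e1, e2]
    rw [pow_succ]
    ring
  · rw [if_neg h1] at hdt
    rw [if_neg h2] at hdti
    rw [if_neg (fun hcon => h1 hcon.1), if_neg (fun hcon => h2 hcon.2)]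
    have e1 : cnt lam i t = m := by omega
    have e2 : cnt lam i (t + 1) = m := by omega
    simp only [FF, e1, e2]
    ring

end Cnt

end Stmt10

namespace Stmt10

section Sums

open scoped Classical

variable {lam : YoungDiagram} {i : ℕ}

lemma lt_of_addQ {b : ℕ} (hQ : xv lam b + i ∉ Set.range (xv lam)) :
    b < lam.colLen 0 + i := by
  by_contra hc
  push_neg at hc
  apply hQ
  rw [xv_of_colLen_le (by omega)]
  apply mem_range_xv_of_le
  omega

lemma lt_of_remQ {a : ℕ} (hQ : xv lam a - i ∉ Set.range (xv lam)) :
    a < lam.colLen 0 := by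
  by_contra hc
  push_neg at hc
  apply hQ
  rw [xv_of_colLen_le (by omega)]
  apply mem_range_xv_of_le
  push_cast
  omega

variable (lam i) in
noncomputable def bInd (t : ℤ) : ℕ :=
  if h : t ∈ Set.range (xv lam) then h.choose else 0

lemma xv_bInd {t : ℤ} (h : t ∈ Set.range (xv lam)) : xv lam (bInd lam t) = t := by
  rw [bInd, dif_pos h]
  exact h.choose_spec

variable (lam i) in
/-- addable positions -/
noncomputable def TA : Finset ℕ :=
  (Finset.range (lam.colLen 0 + i)).filter fun b => xv lam b + i ∉ Set.range (xv lam)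

variable (lam i) in
/-- removable positions -/
noncomputable def TR : Finset ℕ :=
  (Finset.range (lam.colLen 0)).filter fun a => xv lam a - i ∉ Set.range (xv lam)

lemma telescope (hi : 1 ≤ i) :
    ∑ k ∈ Finset.range (BB lam i), (FF lam i (LL lam i + k + 1) - FF lam i (LL lam i + k)) =
      1 - (-1) ^ i := by
  have h1 := Finset.sum_range_sub (f := fun k => FF lam i (LL lam i + k)) (n := BB lam i)
  have h2 : ∀ k : ℕ, FF lam i (LL lam i + (k + 1 : ℕ)) = FF lam i (LL lam i + k + 1) := by
    intro k
    congr 1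
    push_cast
    ring
  rw [Finset.sum_congr rfl (fun k _ => by rw [h2 k])] at h1
  rw [h1]
  have h3 : FF lam i (LL lam i + (0 : ℕ)) = (-1) ^ i := by
    simp only [FF, Nat.cast_zero, add_zero, cnt_LL hi]
  have h4 : FF lam i (LL lam i + (BB lam i : ℕ)) = 1 := by
    simp only [FF, cnt_top, pow_zero]
  rw [h3, h4]

lemma sum_addable (hi : 1 ≤ i) :
    ∑ k ∈ Finset.range (BB lam i),
        (if (LL lam i + k ∈ Set.range (xv lam) ∧ LL lam i + k + i ∉ Set.range (xv lam))
          then (2 : ℤ) * (-1) ^ (cnt lam i (LL lam i + k) - 1) else 0) =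
      2 * ∑ b ∈ TA lam i, (-1 : ℤ) ^ (b - aOf lam i b) := by
  rw [← Finset.sum_filter, Finset.mul_sum]
  refine Finset.sum_bij' (fun k _ => bInd lam (LL lam i + k))
    (fun b _ => (xv lam b - LL lam i).toNat) ?_ ?_ ?_ ?_ ?_
  · -- maps into TA
    intro k hk
    rw [Finset.mem_filter] at hk
    obtain ⟨_, h1, h2⟩ := hk
    have hx := xv_bInd h1
    rw [TA, Finset.mem_filter, Finset.mem_range]
    rw [hx]
    exact ⟨lt_of_addQ (by rw [hx]; exact h2), h2⟩
  · -- maps back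
    intro b hb
    rw [TA, Finset.mem_filter, Finset.mem_range] at hb
    obtain ⟨h1, h2⟩ := hb
    have hge : LL lam i ≤ xv lam b := by
      have := xv_neg_le lam b
      simp only [LL]
      omega
    have hlt : xv lam b ≤ lam.rowLen 0 := by
      have := xv_le lam b
      simp only [xv] at this ⊢
      omega
    rw [Finset.mem_filter, Finset.mem_range]
    have he : LL lam i + ((xv lam b - LL lam i).toNat : ℤ) = xv lam b := by omega
    refine ⟨?_, ?_, ?_⟩
    · simp only [LL, BB] at *
      omega
    · rw [he]; exact ⟨b, rfl⟩
    · rw [he]; exact h2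
  · intro k hk
    rw [Finset.mem_filter] at hk
    have hx := xv_bInd hk.2.1
    rw [hx]
    omega
  · intro b hb
    rw [TA, Finset.mem_filter, Finset.mem_range] at hb
    have hge : LL lam i ≤ xv lam b := by
      have := xv_neg_le lam b
      simp only [LL]
      omega
    have he : LL lam i + ((xv lam b - LL lam i).toNat : ℤ) = xv lam b := by omega
    have hv : bInd lam (xv lam b) = b := xv_inj (xv_bInd ⟨b, rfl⟩)
    rw [he, hv]
  · intro k hk
    rw [Finset.mem_filter] at hk
    obtain ⟨_, h1, h2⟩ := hk
    have hx := xv_bInd h1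
    have hQ : xv lam (bInd lam (LL lam i + k)) + i ∉ Set.range (xv lam) := by
      rw [hx]; exact h2
    have hcv := cnt_addable hi hQ
    rw [hx] at hcv
    rw [hcv]
    norm_num

lemma sum_removable (hi : 1 ≤ i) :
    ∑ k ∈ Finset.range (BB lam i),
        (if (LL lam i + k ∉ Set.range (xv lam) ∧ LL lam i + k + i ∈ Set.range (xv lam))
          then (2 : ℤ) * (-1) ^ (cnt lam i (LL lam i + k)) else 0) =
      2 * ∑ a ∈ TR lam i, (-1 : ℤ) ^ (bOfR lam i a - a) := by
  rw [← Finset.sum_filter, Finset.mul_sum]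
  refine Finset.sum_bij' (fun k _ => bInd lam (LL lam i + k + i))
    (fun a _ => (xv lam a - i - LL lam i).toNat) ?_ ?_ ?_ ?_ ?_
  · intro k hk
    rw [Finset.mem_filter] at hk
    obtain ⟨_, h1, h2⟩ := hk
    have hx := xv_bInd h2
    have hQ : xv lam (bInd lam (LL lam i + k + i)) - i ∉ Set.range (xv lam) := by
      rw [hx]
      simpa using h1
    rw [TR, Finset.mem_filter, Finset.mem_range]
    exact ⟨lt_of_remQ hQ, hQ⟩
  · intro a ha
    rw [TR, Finset.mem_filter, Finset.mem_range] at ha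
    obtain ⟨h1, h2⟩ := ha
    have hge : LL lam i ≤ xv lam a - i := by
      have := xv_neg_le lam a
      simp only [LL]
      omega
    have hlt : xv lam a ≤ lam.rowLen 0 := by
      have := xv_le lam a
      simp only [xv] at this ⊢
      omega
    rw [Finset.mem_filter, Finset.mem_range]
    have he : LL lam i + ((xv lam a - i - LL lam i).toNat : ℤ) = xv lam a - i := by omega
    refine ⟨?_, ?_, ?_⟩
    · simp only [LL, BB] at *
      omega
    · rw [he]; exact h2
    · rw [he]
      have : xv lam a - i + i = xv lam a := by ring
      rw [this]
      exact ⟨a, rfl⟩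
  · intro k hk
    rw [Finset.mem_filter] at hk
    have hx := xv_bInd hk.2.2
    rw [hx]
    omega
  · intro a ha
    rw [TR, Finset.mem_filter, Finset.mem_range] at ha
    have hge : LL lam i ≤ xv lam a - i := by
      have := xv_neg_le lam a
      simp only [LL]
      omega
    have he : LL lam i + ((xv lam a - i - LL lam i).toNat : ℤ) + i = xv lam a := by omega
    have hv : bInd lam (xv lam a) = a := xv_inj (xv_bInd ⟨a, rfl⟩)
    rw [he, hv]
  · intro k hk
    rw [Finset.mem_filter] at hk
    obtain ⟨_, h1, h2⟩ := hk
    have hx := xv_bInd h2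
    have hQ : xv lam (bInd lam (LL lam i + k + i)) - i ∉ Set.range (xv lam) := by
      rw [hx]
      simpa using h1
    have hcv := cnt_removable hi hQ
    rw [hx] at hcv
    have he : LL lam i + k + i - i = LL lam i + k := by ring
    rw [he] at hcv
    rw [hcv]

/-- the master identity at the level of finite sums -/
lemma master (hi : 1 ≤ i) :
    ∑ b ∈ TA lam i, (-1 : ℤ) ^ (b - aOf lam i b) =
      (if Odd i then 1 else 0) + ∑ a ∈ TR lam i, (-1 : ℤ) ^ (bOfR lam i a - a) := by
  have h1 := telescope (lam := lam) hi
  have h2 : ∀ k ∈ Finset.range (BB lam i),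
      FF lam i (LL lam i + k + 1) - FF lam i (LL lam i + k) =
      (if (LL lam i + k ∈ Set.range (xv lam) ∧ LL lam i + k + i ∉ Set.range (xv lam))
        then (2 : ℤ) * (-1) ^ (cnt lam i (LL lam i + k) - 1) else 0)
      - (if (LL lam i + k ∉ Set.range (xv lam) ∧ LL lam i + k + i ∈ Set.range (xv lam))
        then (2 : ℤ) * (-1) ^ (cnt lam i (LL lam i + k)) else 0) := by
    intro k _
    exact FF_step hi (by omega)
  rw [Finset.sum_congr rfl h2, Finset.sum_sub_distrib, sum_addable hi, sum_removable hi] at h1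
  rcases Nat.even_or_odd i with he | ho
  · rw [if_neg (by simpa using he)]
    rw [he.neg_one_pow] at h1
    linarith
  · rw [if_pos ho]
    rw [ho.neg_one_pow] at h1
    linarith

end Sums

end Stmt10

namespace Stmt10

section Final

variable {lam : YoungDiagram} {i : ℕ}

lemma finsum_add (hi : 1 ≤ i) :
    ∑ᶠ μ : {μ : YoungDiagram // IsRibbon lam μ ∧ (skewCells lam μ).card = i},
        skewSign lam μ.1 = ∑ b ∈ TA lam i, (-1 : ℤ) ^ (b - aOf lam i b) := by
  classical
  set e : {b : ℕ // b ∈ TA lam i} →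
      {μ : YoungDiagram // IsRibbon lam μ ∧ (skewCells lam μ).card = i} := fun x =>
    ⟨addOf lam hi x.1 (Finset.mem_filter.1 x.2).2,
      isRibbon_addOf hi (Finset.mem_filter.1 x.2).2,
      by exact_mod_cast card_addOf hi (Finset.mem_filter.1 x.2).2⟩ with he
  have hbij : Function.Bijective e := by
    constructor
    · rintro ⟨b, hb⟩ ⟨b', hb'⟩ h
      have h2 : addOf lam hi b (Finset.mem_filter.1 hb).2 =
          addOf lam hi b' (Finset.mem_filter.1 hb').2 := congrArg Subtype.val h
      exact Subtype.ext (addOf_inj hi _ _ h2)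
    · rintro ⟨μ, h1, h2⟩
      obtain ⟨b, hQ, heq⟩ := addable_inverse hi h1 h2
      have hb : b ∈ TA lam i :=
        Finset.mem_filter.2 ⟨Finset.mem_range.2 (lt_of_addQ hQ), hQ⟩
      exact ⟨⟨b, hb⟩, Subtype.ext heq.symm⟩
  have hval : ∀ x : {b : ℕ // b ∈ TA lam i},
      (-1 : ℤ) ^ (x.1 - aOf lam i x.1) = skewSign lam (e x).1 := by
    rintro ⟨b, hb⟩
    exact (sign_addOf hi (Finset.mem_filter.1 hb).2).symm
  rw [← finsum_eq_of_bijective e hbij hval]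
  exact (finsum_subtype_eq_finsum_cond
    (f := fun b => (-1 : ℤ) ^ (b - aOf lam i b)) _).trans (finsum_mem_finset_eq_sum _ _)

lemma finsum_rem (hi : 1 ≤ i) :
    ∑ᶠ ν : {ν : YoungDiagram // IsRibbon ν lam ∧ (skewCells ν lam).card = i},
        skewSign ν.1 lam = ∑ a ∈ TR lam i, (-1 : ℤ) ^ (bOfR lam i a - a) := by
  classical
  set e : {a : ℕ // a ∈ TR lam i} →
      {ν : YoungDiagram // IsRibbon ν lam ∧ (skewCells ν lam).card = i} := fun x =>
    ⟨remOf lam hi x.1 (Finset.mem_filter.1 x.2).2,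
      isRibbon_remOf hi (Finset.mem_filter.1 x.2).2,
      by exact_mod_cast card_remOf hi (Finset.mem_filter.1 x.2).2⟩ with he
  have hbij : Function.Bijective e := by
    constructor
    · rintro ⟨a, ha⟩ ⟨a', ha'⟩ h
      have h2 : remOf lam hi a (Finset.mem_filter.1 ha).2 =
          remOf lam hi a' (Finset.mem_filter.1 ha').2 := congrArg Subtype.val h
      exact Subtype.ext (remOf_inj hi _ _ h2)
    · rintro ⟨ν, h1, h2⟩
      obtain ⟨a, hQ, heq⟩ := removable_inverse hi h1 h2
      have ha : a ∈ TR lam i :=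
        Finset.mem_filter.2 ⟨Finset.mem_range.2 (lt_of_remQ hQ), hQ⟩
      exact ⟨⟨a, ha⟩, Subtype.ext heq.symm⟩
  have hval : ∀ x : {a : ℕ // a ∈ TR lam i},
      (-1 : ℤ) ^ (bOfR lam i x.1 - x.1) = skewSign (e x).1 lam := by
    rintro ⟨a, ha⟩
    exact (sign_remOf hi (Finset.mem_filter.1 ha).2).symm
  rw [← finsum_eq_of_bijective e hbij hval]
  exact (finsum_subtype_eq_finsum_cond
    (f := fun a => (-1 : ℤ) ^ (bOfR lam i a - a)) _).trans (finsum_mem_finset_eq_sum _ _)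

end Final

end Stmt10


/-- For every partition `λ` and `i ≥ 1`, the signed sum of the ribbons of size
`i` addable to `λ` equals `o_i` (1 if `i` is odd, 0 otherwise) plus the signed
sum of the ribbons of size `i` removable from `λ`. -/
theorem stmt10 (lam : YoungDiagram) (i : ℕ) (hi : 1 ≤ i) :
    ∑ᶠ μ : {μ : YoungDiagram // IsRibbon lam μ ∧ (skewCells lam μ).card = i},
        skewSign lam μ.1 =
      (if Odd i then 1 else 0) +
        ∑ᶠ ν : {ν : YoungDiagram // IsRibbon ν lam ∧ (skewCells ν lam).card = i},
          skewSign ν.1 lam := by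
  rw [Stmt10.finsum_add hi, Stmt10.finsum_rem hi]
  exact Stmt10.master hi
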